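/- Define a sequence by n₁ = 1 and n_{i+1} = n_i·2^{2i} for i ≥ 1, and let f : [1,∞) → ℝ≥0 be the function with f(n) = 2·n_i for n_i ≤ n < n_{i+1}. Then f is nondecreasing, f ⪯ 𝔦, ¬(𝔦 ⪯ f) (so f ≺ 𝔦), and yet ¬(f ≪ 𝔦). In particular f ≺ 𝔦 does not imply f ≪ 𝔦. -/

import Mathlib

/-- `h ⪯ f` : there are positive integers `K, M` and an integer `N₀ ≥ 0` with
`h n ≤ K * f (M * n)` for all `n ≥ N₀`. -/
def FPreceq (h f : ℕ → ℝ) : Prop :=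
  ∃ K M N₀ : ℕ, 0 < K ∧ 0 < M ∧ ∀ n ≥ N₀, h n ≤ (K : ℝ) * f (M * n)

/-- `h ≪ f` : there is an unbounded nondecreasing nonnegative function `t`
with `h·t ⪯ f`. -/
def FLl (h f : ℕ → ℝ) : Prop :=
  ∃ t : ℕ → ℝ, Monotone t ∧ (∀ n, 0 ≤ t n) ∧ (∀ C : ℝ, ∃ n, C < t n) ∧
    FPreceq (fun n => h n * t n) f

/-- Let `n₁ = 1`, `n_{i+1} = n_i·2^{2i}` for `i ≥ 1`, and let `f` be the
function on `[1,∞)` with `f(n) = 2·n_i` for `n_i ≤ n < n_{i+1}`.  Then `f` is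
nondecreasing (on `[1,∞)`), `f ⪯ 𝔦`, `¬(𝔦 ⪯ f)` (so `f ≺ 𝔦`), and yet
`¬(f ≪ 𝔦)`.  In particular `f ≺ 𝔦` does not imply `f ≪ 𝔦`. -/
theorem fprec_not_implies_fll (nseq : ℕ → ℕ) (hone : nseq 1 = 1)
    (hrec : ∀ i, 1 ≤ i → nseq (i + 1) = nseq i * 2 ^ (2 * i))
    (f : ℕ → ℝ)
    (hf : ∀ i, 1 ≤ i → ∀ n : ℕ, nseq i ≤ n → n < nseq (i + 1) → f n = 2 * (nseq i : ℝ)) :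
    (∀ a b : ℕ, 1 ≤ a → a ≤ b → f a ≤ f b) ∧
    FPreceq f (fun n => (n : ℝ)) ∧
    ¬ FPreceq (fun n => (n : ℝ)) f ∧
    ¬ FLl f (fun n => (n : ℝ)) := by
  -- positivity of nseq on [1,∞)
  have h1 : ∀ i, 1 ≤ i → 1 ≤ nseq i := by
    intro i hi
    induction i, hi using Nat.le_induction with
    | base => omega
    | succ i hi ih =>
      rw [hrec i hi]
      have h2 : 1 ≤ 2 ^ (2 * i) := Nat.one_le_two_pow
      calc 1 = 1 * 1 := by ring
      _ ≤ nseq i * 2 ^ (2 * i) := Nat.mul_le_mul ih h2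
  -- strict growth
  have hlt : ∀ i, 1 ≤ i → nseq i < nseq (i + 1) := by
    intro i hi
    rw [hrec i hi]
    have h2 : 2 ≤ 2 ^ (2 * i) := by
      calc 2 = 2 ^ 1 := by ring
      _ ≤ 2 ^ (2 * i) := Nat.pow_le_pow_right (by norm_num) (by omega)
    have := h1 i hi
    nlinarith
  -- monotonicity on indices
  have hmono : ∀ i j, 1 ≤ i → i ≤ j → nseq i ≤ nseq j := by
    intro i j hi hij
    induction j, hij using Nat.le_induction with
    | base => exact le_refl _
    | succ j hij ih => exact le_trans ih (le_of_lt (hlt j (le_trans hi hij)))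
  -- growth lower bound
  have hpow : ∀ i, 2 ^ i ≤ nseq (i + 1) := by
    intro i
    rcases Nat.eq_zero_or_pos i with h | h
    · subst h; simp [hone]
    · rw [hrec i h]
      calc 2 ^ i = 1 * 2 ^ i := by ring
      _ ≤ nseq i * 2 ^ (2 * i) :=
        Nat.mul_le_mul (h1 i h) (Nat.pow_le_pow_right (by norm_num) (by omega))
  -- covering
  have hcover : ∀ n : ℕ, 1 ≤ n → ∃ i, 1 ≤ i ∧ nseq i ≤ n ∧ n < nseq (i + 1) := by
    intro n hn
    induction n, hn using Nat.le_induction with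
    | base =>
      refine ⟨1, le_refl _, by omega, ?_⟩
      have h2 := hlt 1 (le_refl _)
      omega
    | succ n hn ih =>
      obtain ⟨i, hi, hle, hlt'⟩ := ih
      by_cases hc : n + 1 < nseq (i + 1)
      · exact ⟨i, hi, by omega, hc⟩
      · have heq : n + 1 = nseq (i + 1) := by omega
        refine ⟨i + 1, by omega, by omega, ?_⟩
        have := hlt (i + 1) (by omega)
        omega
  -- value of f at nseq i
  have hfval : ∀ i, 1 ≤ i → f (nseq i) = 2 * (nseq i : ℝ) := by
    intro i hi
    exact hf i hi (nseq i) le_rfl (hlt i hi)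
  refine ⟨?_, ?_, ?_, ?_⟩
  · -- monotone
    intro a b ha hab
    obtain ⟨i, hi, hia, hia'⟩ := hcover a ha
    obtain ⟨j, hj, hjb, hjb'⟩ := hcover b (le_trans ha hab)
    have hij : i ≤ j := by
      by_contra hc
      push_neg at hc
      have : nseq (j + 1) ≤ nseq i := hmono (j + 1) i (by omega) (by omega)
      omega
    rw [hf i hi a hia hia', hf j hj b hjb hjb']
    have := hmono i j hi hij
    have : (nseq i : ℝ) ≤ (nseq j : ℝ) := by exact_mod_cast this
    linarith
  · -- f ⪯ id
    refine ⟨2, 1, 1, by norm_num, by norm_num, ?_⟩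
    intro n hn
    obtain ⟨i, hi, hle, hlt'⟩ := hcover n hn
    rw [hf i hi n hle hlt']
    have : (nseq i : ℝ) ≤ (n : ℝ) := by exact_mod_cast hle
    push_cast
    linarith
  · -- ¬ id ⪯ f
    rintro ⟨K, M, N₀, hK, hM, hle⟩
    -- choose large i
    set i := M + 2 * K + N₀ + 1 with hidef
    have hi1 : 1 ≤ i := by omega
    have h2i : M + 2 * K + N₀ + 1 < 2 ^ i := Nat.lt_two_pow_self
    set n := nseq i * 2 ^ i with hndef
    have hni : 1 ≤ nseq i := h1 i hi1
    have hnN : N₀ ≤ n := by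
      calc N₀ ≤ 2 ^ i := by omega
      _ = 1 * 2 ^ i := by ring
      _ ≤ n := Nat.mul_le_mul hni le_rfl
    have hp : 0 < 2 ^ i := by positivity
    have hMn_lo : nseq i ≤ M * n := by
      calc nseq i = 1 * (nseq i * 1) := by ring
      _ ≤ M * (nseq i * 2 ^ i) := Nat.mul_le_mul hM (Nat.mul_le_mul le_rfl hp)
      _ = M * n := by rw [hndef]
    have hMn_hi : M * n < nseq (i + 1) := by
      rw [hrec i hi1]
      have hM2 : M < 2 ^ i := by omega
      have s1 : M * 2 ^ i < 2 ^ i * 2 ^ i := mul_lt_mul_of_pos_right hM2 hp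
      have s2 : M * 2 ^ i * nseq i < 2 ^ i * 2 ^ i * nseq i :=
        mul_lt_mul_of_pos_right s1 (by omega)
      calc M * n = M * 2 ^ i * nseq i := by rw [hndef]; ring
      _ < 2 ^ i * 2 ^ i * nseq i := s2
      _ = nseq i * 2 ^ (2 * i) := by rw [two_mul, pow_add]; ring
    have := hle n hnN
    simp only at this
    rw [hf i hi1 (M * n) hMn_lo hMn_hi] at this
    -- (n : ℝ) ≤ K * (2 * nseq i), but n = nseq i * 2^i and 2K < 2^i
    have hcast : (n : ℝ) = (nseq i : ℝ) * 2 ^ i := by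
      rw [hndef]; push_cast; ring
    rw [hcast] at this
    have h2K : (2 * K : ℝ) < 2 ^ i := by
      have : (2 * K : ℕ) < 2 ^ i := by omega
      exact_mod_cast this
    have hnipos : (0:ℝ) < (nseq i : ℝ) := by exact_mod_cast hni
    nlinarith
  · -- ¬ f ≪ id
    rintro ⟨t, tmono, tnn, tunb, K, M, N₀, hK, hM, hle⟩
    obtain ⟨n₀, hn₀⟩ := tunb ((K : ℝ) * M)
    -- choose i with nseq i ≥ max n₀ N₀
    obtain ⟨i, hi1, hige⟩ : ∃ i, 1 ≤ i ∧ max n₀ N₀ ≤ nseq i := by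
      refine ⟨max n₀ N₀ + 1, by omega, ?_⟩
      have := hpow (max n₀ N₀)
      have := Nat.lt_two_pow_self (n := max n₀ N₀)
      omega
    set n := nseq i with hndef
    have hnN : N₀ ≤ n := le_trans (le_max_right _ _) hige
    have hn₀n : n₀ ≤ n := le_trans (le_max_left _ _) hige
    have h := hle n hnN
    simp only at h
    rw [hfval i hi1] at h
    have htn : (K : ℝ) * M < t n := lt_of_lt_of_le hn₀ (tmono hn₀n)
    have hnpos : (0:ℝ) < (n : ℝ) := by
      have := h1 i hi1
      exact_mod_cast this
    have hKM : (0:ℝ) < (K : ℝ) * M := by positivity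
    have hcast : ((M * n : ℕ) : ℝ) = (M : ℝ) * n := by push_cast; ring
    rw [hcast] at h
    -- 2 * n * t n ≤ K * (M * n), t n > K*M, n > 0 : contradiction
    nlinarith [tnn n]
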